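/- arXiv:2605.30651 — 2 statements merged into one kernel-verified Lean document; each statement's English description precedes it below -/
import Mathlib

section
/- Let G be a positive semidefinite K×K real matrix and ℓ ∈ ℝᴷ have strictly positive entries. Then the maximum of ρ(q) = (qᵀGq)/(ℓᵀq) over the simplex Δᴷ equals max over k ∈ [K] of G_{kk}/ℓ_k. -/
open Matrix

/-- The maximum of `ρ(q) = qᵀGq / ℓᵀq` over the probability simplex equals
`max_k G_{kk}/ℓ_k`. -/
theorem rho_max_at_vertex (K : ℕ) (hK : 0 < K) (G : Matrix (Fin K) (Fin K) ℝ)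
    (hG : G.PosSemidef) (ℓ : Fin K → ℝ) (hℓ : ∀ i, 0 < ℓ i) :
    IsGreatest ((fun q : Fin K → ℝ => (q ⬝ᵥ G.mulVec q) / (ℓ ⬝ᵥ q)) ''
        {q : Fin K → ℝ | (∀ i, 0 ≤ q i) ∧ ∑ i, q i = 1})
      (⨆ k : Fin K, G k k / ℓ k) := by
  haveI : Nonempty (Fin K) := Fin.pos_iff_nonempty.mp hK
  -- basic facts
  have hsym : ∀ i j, G j i = G i j := by
    intro i j
    have := hG.1
    rw [Matrix.IsHermitian] at this
    conv_lhs => rw [← this]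
    simp [Matrix.conjTranspose_apply]
  have hquad : ∀ x : Fin K → ℝ, 0 ≤ x ⬝ᵥ G.mulVec x := by
    intro x
    simpa using hG.dotProduct_mulVec_nonneg x
  have hdiag : ∀ i, 0 ≤ G i i := by
    intro i
    have := hquad (Pi.single i 1)
    simpa [dotProduct, Matrix.mulVec, Pi.single_apply, Finset.mul_sum] using this
  have hoff : ∀ i j, 2 * G i j ≤ G i i + G j j := by
    intro i j
    rcases eq_or_ne i j with rfl | hij
    · linarith [hdiag i]
    · have := hquad (Pi.single i 1 - Pi.single j 1)
      have hexp : (Pi.single i 1 - Pi.single j 1 : Fin K → ℝ) ⬝ᵥ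
          G.mulVec (Pi.single i 1 - Pi.single j 1) = G i i - G i j - G j i + G j j := by
        simp only [dotProduct, Matrix.mulVec, Pi.sub_apply, Pi.single_apply, sub_mul, mul_sub,
          ite_mul, one_mul, zero_mul, mul_ite, mul_one, mul_zero,
          Finset.sum_sub_distrib, Finset.sum_ite_eq, Finset.sum_ite_eq',
          Finset.mem_univ, if_true, hij, hij.symm, if_false]
        ring
      rw [hexp] at this
      have := hsym i j
      linarith
  -- the sup and its attainment
  obtain ⟨k₀, hk₀⟩ := exists_eq_ciSup_of_finite (f := fun k : Fin K => G k k / ℓ k)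
  have hbdd : BddAbove (Set.range fun k : Fin K => G k k / ℓ k) := Set.finite_range _ |>.bddAbove
  have hle_sup : ∀ k, G k k / ℓ k ≤ ⨆ k : Fin K, G k k / ℓ k := fun k => le_ciSup hbdd k
  constructor
  · -- membership
    refine ⟨Pi.single k₀ 1, ⟨fun i => ?_, by simp⟩, ?_⟩
    · by_cases h : i = k₀ <;> simp [Pi.single_apply, h]
    · have h1 : (Pi.single k₀ 1 : Fin K → ℝ) ⬝ᵥ G.mulVec (Pi.single k₀ 1) = G k₀ k₀ := by
        simp [dotProduct, Matrix.mulVec, Pi.single_apply, Finset.mul_sum]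
      have h2 : ℓ ⬝ᵥ (Pi.single k₀ 1 : Fin K → ℝ) = ℓ k₀ := by
        simp [dotProduct, Pi.single_apply]
      simp only [h1, h2, hk₀]
  · rintro x ⟨q, ⟨hq0, hq1⟩, rfl⟩
    set M := ⨆ k : Fin K, G k k / ℓ k with hM
    have hℓq : 0 < ℓ ⬝ᵥ q := by
      have : ∀ i, ℓ i * q i ≥ (⨅ j, ℓ j) * q i := by
        intro i
        exact mul_le_mul_of_nonneg_right (ciInf_le (Set.finite_range _ |>.bddBelow) i) (hq0 i)
      calc 0 < ⨅ j, ℓ j := by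
              obtain ⟨j, hj⟩ := exists_eq_ciInf_of_finite (f := ℓ)
              rw [← hj]; exact hℓ j
        _ = (⨅ j, ℓ j) * ∑ i, q i := by rw [hq1, mul_one]
        _ = ∑ i, (⨅ j, ℓ j) * q i := by rw [Finset.mul_sum]
        _ ≤ ∑ i, ℓ i * q i := Finset.sum_le_sum fun i _ => this i
        _ = ℓ ⬝ᵥ q := rfl
    rw [div_le_iff₀ hℓq]
    -- qᵀGq ≤ Σ_i q_i G_ii ≤ M * ℓᵀq
    have step1 : q ⬝ᵥ G.mulVec q ≤ ∑ i, q i * G i i := by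
      have expand : q ⬝ᵥ G.mulVec q = ∑ i, ∑ j, q i * G i j * q j := by
        simp [dotProduct, Matrix.mulVec, Finset.mul_sum, mul_assoc]
      rw [expand]
      have bound : ∀ i j, q i * G i j * q j ≤ q i * ((G i i + G j j) / 2) * q j := by
        intro i j
        have h := hoff i j
        have hqq : 0 ≤ q i * q j := mul_nonneg (hq0 i) (hq0 j)
        nlinarith
      calc ∑ i, ∑ j, q i * G i j * q j
          ≤ ∑ i, ∑ j, q i * ((G i i + G j j) / 2) * q j :=
            Finset.sum_le_sum fun i _ => Finset.sum_le_sum fun j _ => bound i j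
        _ = ∑ i, q i * G i i := by
            have : ∀ i, ∑ j, q i * ((G i i + G j j) / 2) * q j
                = (q i * G i i + q i * ∑ j, G j j * q j) / 2 := by
              intro i
              calc ∑ j, q i * ((G i i + G j j) / 2) * q j
                  = ∑ j, (q i * G i i * q j + q i * (G j j * q j)) / 2 := by
                    exact Finset.sum_congr rfl fun j _ => by ring
                _ = ((∑ j, q i * G i i * q j) + ∑ j, q i * (G j j * q j)) / 2 := by
                    rw [← Finset.sum_div, Finset.sum_add_distrib]
                _ = (q i * G i i + q i * ∑ j, G j j * q j) / 2 := by
                    rw [← Finset.mul_sum, ← Finset.mul_sum, hq1, mul_one]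
            simp only [this]
            rw [← Finset.sum_div, Finset.sum_add_distrib, ← Finset.sum_mul,
              hq1, one_mul]
            have : ∑ i, q i * G i i = ∑ j, G j j * q j := by
              congr 1; ext i; ring
            rw [← this]
            ring
    have step2 : ∑ i, q i * G i i ≤ M * (ℓ ⬝ᵥ q) := by
      have : ∀ i, q i * G i i ≤ M * (ℓ i * q i) := by
        intro i
        have h1 : G i i / ℓ i ≤ M := hle_sup i
        have h2 : G i i ≤ M * ℓ i := (div_le_iff₀ (hℓ i)).mp h1
        have := mul_le_mul_of_nonneg_left h2 (hq0 i)
        nlinarith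
      calc ∑ i, q i * G i i ≤ ∑ i, M * (ℓ i * q i) := Finset.sum_le_sum fun i _ => this i
        _ = M * (ℓ ⬝ᵥ q) := by rw [← Finset.mul_sum]; rfl
    linarith
end

section
/- Let ĝ₁ ≥ ĝ₂ ≥ … ≥ ĝ_K be reals, 1 ≤ B < K with ĝ_B > ĝ_{B+1}, and p the uniform distribution on [K]. Define τ = (1/K)·∑_{j=1}^{B}(ĝⱼ - ĝ_{B+1}). Then the vector q̂ with q̂ᵢ = (ĝᵢ - ĝ_{B+1})/∑_{j=1}^{B}(ĝⱼ - ĝ_{B+1}) for i ≤ B and q̂ᵢ = 0 for i > B is a probability vector in Δᴷ with support exactly {1,…,B}, and it maximizes F(q) = ∑ₖ ĝₖ(qₖ - pₖ) - (τ/2)·χ²(q‖p) over all q ∈ Δᴷ. -/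
/-- The `B`-parameterized closed form: with scores sorted decreasingly,
`ĝ_B > ĝ_{B+1}`, and `τ = (1/K)∑_{j≤B}(ĝ_j - ĝ_{B+1})`, the margin-proportional
weight vector `q̂` is a probability vector supported exactly on the top `B` indices,
and it maximizes `F(q) = ∑ₖ ĝₖ(qₖ - pₖ) - (τ/2)χ²(q‖p)` over the simplex. -/
theorem lark_closed_form (K B : ℕ) (g : Fin K → ℝ)
    (hsort : ∀ i j : Fin K, i ≤ j → g j ≤ g i)
    (hB1 : 1 ≤ B) (hBK : B < K)
    (hgap : g ⟨B, hBK⟩ < g ⟨B - 1, Nat.lt_of_le_of_lt (Nat.sub_le B 1) hBK⟩)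
    (S : ℝ)
    (hS : S = ∑ j ∈ Finset.univ.filter (fun j : Fin K => (j : ℕ) < B),
      (g j - g ⟨B, hBK⟩))
    (τ : ℝ) (hτ : τ = S / K)
    (qhat : Fin K → ℝ)
    (hqhat : ∀ i : Fin K,
      qhat i = if (i : ℕ) < B then (g i - g ⟨B, hBK⟩) / S else 0)
    (F : (Fin K → ℝ) → ℝ)
    (hF : ∀ x : Fin K → ℝ,
      F x = (∑ k, g k * (x k - 1 / K)) -
        (τ / 2) * ∑ k, (x k - 1 / K) ^ 2 / (1 / K)) :
    (∀ i, 0 ≤ qhat i) ∧ (∑ i, qhat i = 1) ∧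
      (∀ i : Fin K, qhat i ≠ 0 ↔ (i : ℕ) < B) ∧
      (∀ x : Fin K → ℝ, (∀ i, 0 ≤ x i) → ∑ i, x i = 1 → F x ≤ F qhat) := by
  have hK0 : 0 < K := lt_of_le_of_lt (Nat.zero_le B) hBK
  have hKR : (0:ℝ) < K := by exact_mod_cast hK0
  set gB := g ⟨B, hBK⟩ with hgBdef
  have hlt : ∀ i : Fin K, (i : ℕ) < B → gB < g i := by
    intro i hi
    have h1 : g ⟨B - 1, Nat.lt_of_le_of_lt (Nat.sub_le B 1) hBK⟩ ≤ g i := by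
      apply hsort
      simp only [Fin.le_def]
      omega
    exact lt_of_lt_of_le hgap h1
  have hge : ∀ i : Fin K, B ≤ (i : ℕ) → g i ≤ gB := by
    intro i hi
    exact hsort ⟨B, hBK⟩ i (by simpa [Fin.le_def] using hi)
  have hSpos : 0 < S := by
    rw [hS]
    apply Finset.sum_pos'
    · intro j hj
      simp only [Finset.mem_filter] at hj
      linarith [hlt j hj.2]
    · refine ⟨⟨B - 1, Nat.lt_of_le_of_lt (Nat.sub_le B 1) hBK⟩, ?_, ?_⟩
      · simp only [Finset.mem_filter, Finset.mem_univ, true_and]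
        omega
      · linarith [hgap]
  have hτpos : 0 < τ := by rw [hτ]; positivity
  have hSK : S * (1 / K) = τ := by rw [hτ]; field_simp
  -- nonnegativity
  have hnn : ∀ i, 0 ≤ qhat i := by
    intro i
    rw [hqhat i]
    split
    · next h => exact div_nonneg (by linarith [hlt i h]) hSpos.le
    · exact le_refl 0
  -- sum to one
  have hsum1 : ∑ i, qhat i = 1 := by
    have : ∑ i, qhat i =
        ∑ j ∈ Finset.univ.filter (fun j : Fin K => (j : ℕ) < B), (g j - gB) / S := by
      rw [Finset.sum_filter]
      exact Finset.sum_congr rfl fun i _ => by rw [hqhat i]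
    rw [this, ← Finset.sum_div, ← hS, div_self hSpos.ne']
  -- support
  have hsupp : ∀ i : Fin K, qhat i ≠ 0 ↔ (i : ℕ) < B := by
    intro i
    constructor
    · intro hne
      by_contra hcon
      apply hne
      rw [hqhat i, if_neg hcon]
    · intro hi
      rw [hqhat i, if_pos hi]
      have : 0 < (g i - gB) / S := div_pos (by linarith [hlt i hi]) hSpos
      linarith
  refine ⟨hnn, hsum1, hsupp, ?_⟩
  -- the maximization claim
  intro x hx hxs
  have hFeq : ∀ y : Fin K → ℝ,
      F y = ∑ k, (g k * (y k - 1 / K) - (S / 2) * (y k - 1 / K) ^ 2) := by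
    intro y
    rw [hF, Finset.mul_sum, ← Finset.sum_sub_distrib]
    refine Finset.sum_congr rfl fun k _ => ?_
    have h1 : (y k - 1 / (K:ℝ)) ^ 2 / (1 / K) = (y k - 1 / K) ^ 2 * K := by
      field_simp
    rw [h1]
    have h2 : τ * K = S := by rw [hτ]; field_simp
    linear_combination (-(y k - 1 / (K:ℝ)) ^ 2 / 2) * h2
  have hdiff : F x - F qhat =
      ∑ k, ((x k - qhat k) * (g k - S * (qhat k - 1 / K))
        - (S / 2) * (x k - qhat k) ^ 2) := by
    rw [hFeq x, hFeq qhat, ← Finset.sum_sub_distrib]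
    exact Finset.sum_congr rfl fun k _ => by ring
  have hterm : ∀ k : Fin K, (x k - qhat k) * (g k - S * (qhat k - 1 / K)) =
      (x k - qhat k) * (gB + τ) +
        (if (k : ℕ) < B then 0 else x k * (g k - gB)) := by
    intro k
    by_cases hk : (k : ℕ) < B
    · rw [hqhat k, if_pos hk, if_pos hk]
      have h1 : S * ((g k - gB) / S - 1 / K) = g k - gB - τ := by
        rw [mul_sub, mul_div_cancel₀ _ hSpos.ne', hSK]
      rw [h1]; ring
    · rw [hqhat k, if_neg hk, if_neg hk]
      have h1 : S * ((0:ℝ) - 1 / K) = -τ := by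
        rw [zero_sub, mul_neg, hSK]
      rw [h1]; ring
  have hlin : ∑ k, (x k - qhat k) * (g k - S * (qhat k - 1 / K)) ≤ 0 := by
    calc ∑ k, (x k - qhat k) * (g k - S * (qhat k - 1 / K))
        = ∑ k, ((x k - qhat k) * (gB + τ) +
            (if (k : ℕ) < B then 0 else x k * (g k - gB))) :=
          Finset.sum_congr rfl fun k _ => hterm k
      _ = (∑ k, (x k - qhat k)) * (gB + τ) +
            ∑ k : Fin K, (if (k : ℕ) < B then 0 else x k * (g k - gB)) := by
          rw [Finset.sum_add_distrib, Finset.sum_mul]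
      _ ≤ 0 := by
          have h0 : ∑ k, (x k - qhat k) = 0 := by
            rw [Finset.sum_sub_distrib, hxs, hsum1]; ring
          rw [h0, zero_mul, zero_add]
          apply Finset.sum_nonpos
          intro k _
          split
          · exact le_refl 0
          · next hk =>
              exact mul_nonpos_of_nonneg_of_nonpos (hx k)
                (by linarith [hge k (le_of_not_gt hk)])
  have hquad : 0 ≤ ∑ k, (S / 2) * (x k - qhat k) ^ 2 := by
    apply Finset.sum_nonneg
    intro k _
    positivity
  have := hdiff
  rw [Finset.sum_sub_distrib] at this
  linarith
end
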